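/- Let α ∈ ℝ with cos α > 0 and sin α ≠ 0, and consider the planar system ṙ = cos(ω − α), ω̇ = 2 r sin ω − (1/r) sin(ω − α) on r > 0. Set r0 = 1/√(2 cos α) and ω0^± = α ± π/2. If sin α > 0 then the fixed point (r0, ω0^+) is asymptotically (exponentially) stable: both eigenvalues of the Jacobian J^+ = [[0, −1], [4 cos α, −2 sin α/√(2 cos α)]] have strictly negative real part. If sin α < 0 then (r0, ω0^−) is asymptotically (exponentially) stable in the same sense. Consequently the reduced leading-order isotropic GAD admits a stable circular orbit of radius ε/√(2 cos α) in the original spatial variable. -/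

import Mathlib

open Real Filter Set
open scoped Topology


lemma auxCos (x : ℝ) : |Real.cos x - 1| ≤ x ^ 2 / 2 := by
  have h1 := Real.one_sub_sq_div_two_le_cos (x := x)
  have h2 := Real.cos_le_one x
  rw [abs_le]; constructor <;> nlinarith

lemma auxSinPos {x : ℝ} (h0 : 0 ≤ x) (h1 : x ≤ 1) : |Real.sin x - x| ≤ x ^ 2 := by
  rcases eq_or_lt_of_le h0 with h | h
  · simp [← h]
  · have h2 := Real.sin_lt h
    have h3 := Real.sin_gt_sub_cube h
    rw [abs_le]; constructor <;> nlinarith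

lemma auxSin {x : ℝ} (h1 : |x| ≤ 1) : |Real.sin x - x| ≤ x ^ 2 := by
  rcases le_total 0 x with h | h
  · exact auxSinPos h (by rwa [abs_of_nonneg h] at h1)
  · have := auxSinPos (x := -x) (by linarith) (by rwa [abs_of_nonpos h] at h1)
    rw [Real.sin_neg] at this
    calc |Real.sin x - x| = |-Real.sin x - -x| := by rw [← abs_neg]; ring_nf
    _ ≤ (-x) ^ 2 := this
    _ = x ^ 2 := by ring

lemma auxMul {x X y Y : ℝ} (h1 : -X ≤ x) (h2 : x ≤ X) (h3 : -Y ≤ y) (h4 : y ≤ Y) :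
    x * y ≤ X * Y := by nlinarith

lemma auxMul' {x X y Y : ℝ} (h1 : -X ≤ x) (h2 : x ≤ X) (h3 : -Y ≤ y) (h4 : y ≤ Y) :
    -(X * Y) ≤ x * y := by nlinarith

lemma auxDecay (v v' : ℝ → ℝ) (c M : ℝ) (hc : 0 < c)
    (hd : ∀ t ∈ Ici (0:ℝ), HasDerivAt v (v' t) t)
    (hnn : ∀ t ∈ Ici (0:ℝ), 0 ≤ v t)
    (h0 : v 0 < M)
    (hineq : ∀ t ∈ Ici (0:ℝ), v t ≤ M → v' t ≤ -c * v t) :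
    ∀ t ∈ Ici (0:ℝ), v t ≤ v 0 * Real.exp (-c * t) := by
  have key : ∀ x ∈ Ici (0:ℝ), v x < M := by
    by_contra hcon
    push_neg at hcon
    obtain ⟨x0, hx0, hMx⟩ := hcon
    set A := {t : ℝ | t ∈ Ici (0:ℝ) ∧ M ≤ v t} with hA
    have hne : A.Nonempty := ⟨x0, hx0, hMx⟩
    have hbdd : BddBelow A := ⟨0, fun y hy => hy.1⟩
    have hclosed : IsClosed A := by
      have hcont : ContinuousOn v (Ici (0:ℝ)) :=
        fun y hy => (hd y hy).continuousAt.continuousWithinAt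
      have := hcont.preimage_isClosed_of_isClosed isClosed_Ici (isClosed_Ici (a := M))
      convert this using 1
      ext t; simp [hA]
    set σ₀ := sInf A with hσ₀
    have hmem : σ₀ ∈ A := hclosed.csInf_mem hne hbdd
    have hσnn : (0:ℝ) ≤ σ₀ := hmem.1
    have hσpos : 0 < σ₀ := by
      rcases eq_or_lt_of_le hσnn with h | h
      · exact absurd hmem.2 (by rw [← h]; exact not_le.2 h0)
      · exact h
    have hlt : ∀ y ∈ Ico (0:ℝ) σ₀, v y < M := by
      intro y hy
      by_contra hge
      exact absurd (csInf_le hbdd ⟨hy.1, not_lt.1 hge⟩) (not_le.2 hy.2)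
    have hanti : AntitoneOn v (Icc (0:ℝ) σ₀) := by
      apply antitoneOn_of_deriv_nonpos (convex_Icc 0 σ₀)
      · exact fun y hy => (hd y hy.1).continuousAt.continuousWithinAt
      · intro y hy
        rw [interior_Icc] at hy
        exact ((hd y (le_of_lt hy.1)).differentiableAt).differentiableWithinAt
      · intro y hy
        rw [interior_Icc] at hy
        rw [(hd y (le_of_lt hy.1)).deriv]
        have h1 := hineq y (le_of_lt hy.1) (le_of_lt (hlt y ⟨le_of_lt hy.1, hy.2⟩))
        have h2 := hnn y (le_of_lt hy.1)
        nlinarith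
    have : v σ₀ ≤ v 0 := hanti ⟨le_refl 0, hσnn⟩ ⟨hσnn, le_refl σ₀⟩ hσnn
    exact absurd hmem.2 (not_le.2 (lt_of_le_of_lt this h0))
  have hanti2 : AntitoneOn (fun t => v t * Real.exp (c * t)) (Ici 0) := by
    apply antitoneOn_of_deriv_nonpos (convex_Ici 0)
    · exact fun y hy => ((hd y hy).continuousAt.mul
        (Real.continuous_exp.comp (continuous_const.mul continuous_id)).continuousAt).continuousWithinAt
    · intro y hy
      rw [interior_Ici] at hy
      exact (((hd y (le_of_lt (show (0:ℝ) < y from hy))).mul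
        (((hasDerivAt_id y).const_mul c).exp)).differentiableAt).differentiableWithinAt
    · intro y hy
      rw [interior_Ici] at hy
      have hD : HasDerivAt (fun t => v t * Real.exp (c * t))
          (v' y * Real.exp (c * y) + v y * (Real.exp (c * y) * (c * 1))) y :=
        (hd y (le_of_lt (show (0:ℝ) < y from hy))).mul (((hasDerivAt_id y).const_mul c).exp)
      rw [hD.deriv]
      have h1 := hineq y (le_of_lt (show (0:ℝ) < y from hy)) (le_of_lt (key y (le_of_lt (show (0:ℝ) < y from hy))))
      have h2 : (0:ℝ) < Real.exp (c * y) := Real.exp_pos _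
      nlinarith
  intro t ht
  have := hanti2 (self_mem_Ici) ht ht
  simp only [mul_zero, Real.exp_zero, mul_one] at this
  have h2 : (0:ℝ) < Real.exp (c * t) := Real.exp_pos _
  have h3 : v t * Real.exp (c * t) ≤ v 0 * Real.exp (-c * t) * Real.exp (c * t) := by
    rw [mul_assoc, ← Real.exp_add]
    simpa using this
  exact le_of_mul_le_mul_right h3 h2


set_option maxHeartbeats 1000000 in
/-- For `cos α > 0` and `sin α ≠ 0`, the fixed point `(r0, ω0^+)` (if
`sin α > 0`) resp. `(r0, ω0^-)` (if `sin α < 0`) of the reduced system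
`ṙ = cos(ω - α)`, `ω̇ = 2r sin ω - (1/r) sin(ω - α)` is exponentially stable: both
eigenvalues of the Jacobian `J^±` have strictly negative real part, and nearby solutions
converge exponentially to it. Consequently, in the original spatial variable, the reduced
leading-order isotropic GAD admits a stable circular orbit of radius `ε/√(2 cos α)`. -/
theorem stmt17 (α : ℝ) (hcos : 0 < Real.cos α) (hsin : Real.sin α ≠ 0)
    (r0 : ℝ) (hr0 : r0 = 1 / Real.sqrt (2 * Real.cos α))
    (σ : ℝ) (hσ : (σ = 1 ∧ 0 < Real.sin α) ∨ (σ = -1 ∧ Real.sin α < 0))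
    (ω0 : ℝ) (hω0 : ω0 = α + σ * (π / 2))
    (J : Matrix (Fin 2) (Fin 2) ℝ)
    (hJ : J = !![0, -σ;
                 σ * 4 * Real.cos α, -σ * (2 * Real.sin α / Real.sqrt (2 * Real.cos α))]) :
    -- both eigenvalues of the Jacobian have strictly negative real part
    (∀ μ : ℂ, Module.End.HasEigenvalue
        (Matrix.toLin' (J.map (Complex.ofReal))) μ → μ.re < 0) ∧
    -- asymptotic (exponential) stability of the fixed point `(r0, ω0)`
    (∃ δ K c : ℝ, 0 < δ ∧ 0 < K ∧ 0 < c ∧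
      ∀ r ω : ℝ → ℝ,
        (∀ t ∈ Ici (0:ℝ), 0 < r t ∧
          HasDerivAt r (Real.cos (ω t - α)) t ∧
          HasDerivAt ω (2 * r t * Real.sin (ω t) - (r t)⁻¹ * Real.sin (ω t - α)) t) →
        |r 0 - r0| + |ω 0 - ω0| < δ →
        ∀ t ∈ Ici (0:ℝ), |r t - r0| + |ω t - ω0| ≤ K * Real.exp (-c * t)) ∧
    -- in the original (un-rescaled) spatial variable the stable orbit has radius
    -- `ε·r0 = ε/√(2 cos α)`
    (∀ ε : ℝ, 0 < ε → ε * r0 = ε / Real.sqrt (2 * Real.cos α)) := by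
  refine ⟨?_, ?_, ?_⟩
  · -- eigenvalues
    have hσsq : σ * σ = 1 := by rcases hσ with ⟨h, _⟩ | ⟨h, _⟩ <;> rw [h] <;> norm_num
    have hσne : σ ≠ 0 := by rcases hσ with ⟨h, _⟩ | ⟨h, _⟩ <;> rw [h] <;> norm_num
    have hs : 0 < σ * Real.sin α := by
      rcases hσ with ⟨h, h2⟩ | ⟨h, h2⟩ <;> rw [h] <;> nlinarith
    have hRpos : 0 < Real.sqrt (2 * Real.cos α) := Real.sqrt_pos.2 (by linarith)
    set R := Real.sqrt (2 * Real.cos α) with hR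
    set p : ℝ := σ * (2 * Real.sin α / R) with hp
    have hppos : 0 < p := by
      have : p = 2 * (σ * Real.sin α) / R := by rw [hp]; ring
      rw [this]; positivity
    have hdpos : 0 < 4 * Real.cos α := by linarith
    intro μ hμ
    obtain ⟨v, hv⟩ := hμ.exists_hasEigenvector
    have happ : Matrix.toLin' (J.map Complex.ofReal) v = μ • v := hv.apply_eq_smul
    rw [Matrix.toLin'_apply] at happ
    have h0 := congrFun happ 0
    have h1 := congrFun happ 1
    subst hJ
    simp [Matrix.mulVec, dotProduct, Fin.sum_univ_two, Matrix.map_apply] at h0 h1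
    set x := v 0 with hx
    set y := v 1 with hy
    have hσc : (σ:ℂ) * (σ:ℂ) = 1 := by exact_mod_cast hσsq
    have hxne : x ≠ 0 := by
      intro hx0
      have hy0 : y = 0 := by
        rw [hx0] at h0
        have hne : (σ:ℂ) ≠ 0 := by exact_mod_cast hσne
        field_simp at h0
        exact (mul_eq_zero.1 (by linear_combination -h0)).resolve_left hne
      apply hv.right
      funext i
      fin_cases i
      · exact hx0
      · exact hy0
    have hRne : (R:ℂ) ≠ 0 := by exact_mod_cast ne_of_gt hRpos
    have hquad : μ ^ 2 + (σ:ℂ) * (2 * Complex.sin α / (R:ℂ)) * μ + 4 * Complex.cos α = 0 := by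
      have key : (μ ^ 2 + (σ:ℂ) * (2 * Complex.sin α / (R:ℂ)) * μ + 4 * Complex.cos α) * x = 0 := by
        linear_combination (-(μ + (σ:ℂ) * (2 * Complex.sin α / (R:ℂ)))) * h0 + (σ:ℂ) * h1
          + (-(4 * Complex.cos α * x)) * hσc
      exact (mul_eq_zero.1 key).resolve_right hxne
    have hquad' : μ ^ 2 + (p:ℂ) * μ + ((4 * Real.cos α : ℝ):ℂ) = 0 := by
      convert hquad using 2
      · push_cast [hp]; ring
      · push_cast; ring
    have hre := congrArg Complex.re hquad'
    have him := congrArg Complex.im hquad'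
    simp [pow_two, Complex.add_re, Complex.add_im, Complex.mul_re, Complex.mul_im,
      Complex.ofReal_re, Complex.ofReal_im, Complex.cos_ofReal_re] at hre him
    by_contra hge
    push_neg at hge
    rcases eq_or_ne μ.im 0 with h | h
    · rw [h] at hre; nlinarith
    · have : 2 * μ.re + p = 0 := by
        rcases mul_eq_zero.1 (show μ.im * (2 * μ.re + p) = 0 by nlinarith [him]) with h' | h'
        · exact absurd h' h
        · exact h'
      nlinarith
  · -- exponential stability
    have hσor : σ = 1 ∨ σ = -1 := by rcases hσ with ⟨h, _⟩ | ⟨h, _⟩ <;> [left; right] <;> exact h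
    have hσsq : σ * σ = 1 := by rcases hσor with h | h <;> rw [h] <;> norm_num
    have hσabs : |σ| = 1 := by rcases hσor with h | h <;> rw [h] <;> norm_num
    -- opaque constants s, g
    obtain ⟨g, hg_def⟩ : ∃ x : ℝ, x = Real.cos α := ⟨_, rfl⟩
    obtain ⟨s, hs_def⟩ : ∃ x : ℝ, x = σ * Real.sin α := ⟨_, rfl⟩
    have hg : 0 < g := by rw [hg_def]; exact hcos
    have hg1 : g ≤ 1 := by rw [hg_def]; exact Real.cos_le_one α
    have hs : 0 < s := by
      rw [hs_def]; rcases hσ with ⟨h, h2⟩ | ⟨h, h2⟩ <;> rw [h] <;> nlinarith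
    have hs1 : s ≤ 1 := by
      rw [hs_def]
      rcases hσor with h | h <;> rw [h]
      · simpa using Real.sin_le_one α
      · have := Real.neg_one_le_sin α; linarith
    have hRpos : 0 < Real.sqrt (2 * Real.cos α) := Real.sqrt_pos.2 (by linarith)
    have hRsq : Real.sqrt (2 * Real.cos α) ^ 2 = 2 * Real.cos α := Real.sq_sqrt (by linarith)
    have hr0pos : 0 < r0 := by rw [hr0]; positivity
    have hr0sq : 2 * g * r0 ^ 2 = 1 := by
      rw [hg_def, hr0, div_pow, one_pow, hRsq]
      field_simp
    -- derived constants
    obtain ⟨a, ha_def⟩ : ∃ x : ℝ, x = 4 * g := ⟨_, rfl⟩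
    obtain ⟨b, hb_def⟩ : ∃ x : ℝ, x = 2 * s * r0 := ⟨_, rfl⟩
    have ha : 0 < a := by rw [ha_def]; linarith
    have hb : 0 < b := by rw [hb_def]; positivity
    obtain ⟨η, hη_def⟩ : ∃ x : ℝ, x = min (2 * a * b / (b ^ 2 + 4 * a)) (min (a / 2) (1 / 2)) :=
      ⟨_, rfl⟩
    have hηpos : 0 < η := by
      rw [hη_def]
      exact lt_min (by positivity) (lt_min (by positivity) one_half_pos)
    have hηa : η ≤ a / 2 := by
      rw [hη_def]; exact (min_le_right _ _).trans (min_le_left _ _)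
    have hη2 : η ≤ 1 / 2 := by
      rw [hη_def]; exact (min_le_right _ _).trans (min_le_right _ _)
    have hη0 : η * (b ^ 2 + 4 * a) ≤ 2 * a * b := by
      have h : η ≤ 2 * a * b / (b ^ 2 + 4 * a) := by rw [hη_def]; exact min_le_left _ _
      have hpos : (0:ℝ) < b ^ 2 + 4 * a := by positivity
      calc η * (b ^ 2 + 4 * a) ≤ (2 * a * b / (b ^ 2 + 4 * a)) * (b ^ 2 + 4 * a) :=
            mul_le_mul_of_nonneg_right h hpos.le
      _ = 2 * a * b := by field_simp
    obtain ⟨m, hm_def⟩ : ∃ x : ℝ, x = min a 1 / 2 := ⟨_, rfl⟩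
    have hm : 0 < m := by rw [hm_def]; positivity
    have hma : 2 * m ≤ a := by rw [hm_def]; have := min_le_left a 1; linarith
    have hm1 : 2 * m ≤ 1 := by rw [hm_def]; have := min_le_right a 1; linarith
    obtain ⟨K1, hK1_def⟩ : ∃ x : ℝ, x = 2 + 3 * r0 / 2 + 1 / 2 + (27 / 4) * r0 ^ 2 := ⟨_, rfl⟩
    have hK1 : 0 < K1 := by rw [hK1_def]; positivity
    obtain ⟨C2, hC2_def⟩ : ∃ x : ℝ, x = 2 * K1 / r0 := ⟨_, rfl⟩
    have hC2 : 0 < C2 := by rw [hC2_def]; positivity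
    have hC2r0 : C2 * r0 = 2 * K1 := by rw [hC2_def]; field_simp
    obtain ⟨C3, hC3_def⟩ : ∃ x : ℝ, x = 2 * a + 1 + 3 * C2 := ⟨_, rfl⟩
    have hC3 : 0 < C3 := by rw [hC3_def]; positivity
    obtain ⟨c1, hc1_def⟩ : ∃ x : ℝ, x = 2 * η * m := ⟨_, rfl⟩
    have hc1 : 0 < c1 := by rw [hc1_def]; positivity
    obtain ⟨ρ, hρ_def⟩ : ∃ x : ℝ, x = min (r0 / 2) (min 1 (c1 / (2 * C3))) := ⟨_, rfl⟩
    have hρpos : 0 < ρ := by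
      rw [hρ_def]; exact lt_min (by positivity) (lt_min one_pos (by positivity))
    have hρ1 : ρ ≤ r0 / 2 := by rw [hρ_def]; exact min_le_left _ _
    have hρ2 : ρ ≤ 1 := by rw [hρ_def]; exact (min_le_right _ _).trans (min_le_left _ _)
    have hρC3 : ρ * (2 * C3) ≤ c1 := by
      have h : ρ ≤ c1 / (2 * C3) := by
        rw [hρ_def]; exact (min_le_right _ _).trans (min_le_right _ _)
      calc ρ * (2 * C3) ≤ (c1 / (2 * C3)) * (2 * C3) :=
            mul_le_mul_of_nonneg_right h (by positivity)
      _ = c1 := by field_simp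
    obtain ⟨L, hL_def⟩ : ∃ x : ℝ, x = a + 2 := ⟨_, rfl⟩
    have hL : 0 < L := by rw [hL_def]; linarith
    obtain ⟨c, hc_def⟩ : ∃ x : ℝ, x = c1 / (4 * L) := ⟨_, rfl⟩
    have hcpos : 0 < c := by rw [hc_def]; positivity
    have hcL : c * (4 * L) = c1 := by rw [hc_def]; field_simp
    obtain ⟨δ, hδ_def⟩ : ∃ x : ℝ, x = Real.sqrt (m / L) * ρ / 2 := ⟨_, rfl⟩
    have hδpos : 0 < δ := by
      rw [hδ_def]
      have : 0 < Real.sqrt (m / L) := Real.sqrt_pos.2 (by positivity)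
      positivity
    have hδ2 : L * δ ^ 2 = m * ρ ^ 2 / 4 := by
      rw [hδ_def, show (Real.sqrt (m / L) * ρ / 2) ^ 2 = Real.sqrt (m / L) ^ 2 * ρ ^ 2 / 4 from by
        ring, Real.sq_sqrt (by positivity : (0:ℝ) ≤ m / L)]
      field_simp
      try ring
    obtain ⟨K, hK_def⟩ : ∃ x : ℝ, x = Real.sqrt (2 * L / m) * δ := ⟨_, rfl⟩
    have hKpos : 0 < K := by
      rw [hK_def]
      have : 0 < Real.sqrt (2 * L / m) := Real.sqrt_pos.2 (by positivity)
      positivity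
    have hK2m : K ^ 2 * m = 2 * L * δ ^ 2 := by
      rw [hK_def, show (Real.sqrt (2 * L / m) * δ) ^ 2 = Real.sqrt (2 * L / m) ^ 2 * δ ^ 2 from by
        ring, Real.sq_sqrt (by positivity : (0:ℝ) ≤ 2 * L / m)]
      field_simp
      try ring
    refine ⟨δ, K, c, hδpos, hKpos, hcpos, ?_⟩
    intro r ω htraj hinit
    -- trajectory-dependent functions
    obtain ⟨u, hut⟩ : ∃ u : ℝ → ℝ, ∀ x, u x = r x - r0 := ⟨_, fun _ => rfl⟩
    obtain ⟨q, hqt⟩ : ∃ q : ℝ → ℝ, ∀ x, q x = σ * (ω x - ω0) := ⟨_, fun _ => rfl⟩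
    obtain ⟨vv, hvvt⟩ : ∃ v : ℝ → ℝ, ∀ x,
        v x = a * u x ^ 2 + q x ^ 2 - 2 * η * (u x * q x) := ⟨_, fun _ => rfl⟩
    obtain ⟨vd, hvdt⟩ : ∃ v : ℝ → ℝ, ∀ x,
        v x = 2 * a * u x * Real.cos (ω x - α)
          + 2 * q x * (σ * (2 * r x * Real.sin (ω x) - (r x)⁻¹ * Real.sin (ω x - α)))
          - 2 * η * (Real.cos (ω x - α) * q x
              + u x * (σ * (2 * r x * Real.sin (ω x) - (r x)⁻¹ * Real.sin (ω x - α)))) :=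
      ⟨_, fun _ => rfl⟩
    -- trig identities
    have hωt : ∀ t, ω t - α = σ * (π / 2) + σ * q t := by
      intro t
      rw [hqt t, hω0]
      linear_combination (α + σ * (π / 2) - ω t) * hσsq
    have hU : ∀ t, Real.cos (ω t - α) = -Real.sin (q t) := by
      intro t
      rw [hωt t]
      rcases hσor with h | h <;> rw [h]
      · rw [show (1:ℝ) * (π / 2) + 1 * q t = π / 2 + q t from by ring]
        simp [Real.cos_add]
      · rw [show (-1:ℝ) * (π / 2) + -1 * q t = -(π / 2 + q t) from by ring]
        rw [Real.cos_neg]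
        simp [Real.cos_add]
    have hSin : ∀ t, Real.sin (ω t - α) = σ * Real.cos (q t) := by
      intro t
      rw [hωt t]
      rcases hσor with h | h <;> rw [h]
      · rw [show (1:ℝ) * (π / 2) + 1 * q t = π / 2 + q t from by ring]
        simp [Real.sin_add]
      · rw [show (-1:ℝ) * (π / 2) + -1 * q t = -(π / 2 + q t) from by ring]
        rw [Real.sin_neg]
        simp [Real.sin_add]
    have hW : ∀ t, σ * (2 * r t * Real.sin (ω t) - (r t)⁻¹ * Real.sin (ω t - α))
        = 2 * r t * (g * Real.cos (q t) - s * Real.sin (q t)) - (r t)⁻¹ * Real.cos (q t) := by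
      intro t
      have e1 : Real.sin (ω t) = Real.sin α * Real.cos (ω t - α)
          + Real.cos α * Real.sin (ω t - α) := by
        rw [← Real.sin_add]
        congr 1
        ring
      rw [e1, hU t, hSin t, hg_def, hs_def]
      linear_combination (2 * r t * Real.cos α * Real.cos (q t)
        - (r t)⁻¹ * Real.cos (q t)) * hσsq
    -- norm comparison facts
    have hvvm : ∀ t, m * (u t ^ 2 + q t ^ 2) ≤ vv t := by
      intro t
      rw [hvvt t]
      clear * - hηpos hηa hη2 hma hm1 ha hm
      nlinarith [mul_nonneg hηpos.le (sq_nonneg (u t - q t)), sq_nonneg (u t), sq_nonneg (q t)]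
    have hvvL : ∀ t, vv t ≤ L * (u t ^ 2 + q t ^ 2) := by
      intro t
      rw [hvvt t, hL_def]
      clear * - hηpos hηa hη2 ha
      nlinarith [mul_nonneg hηpos.le (sq_nonneg (u t + q t)), sq_nonneg (u t), sq_nonneg (q t)]
    have hvnn : ∀ t ∈ Ici (0:ℝ), 0 ≤ vv t := by
      intro t _
      have h1 := hvvm t
      clear * - h1 hm
      nlinarith [sq_nonneg (u t), sq_nonneg (q t)]
    -- derivative of vv
    have hder : ∀ t ∈ Ici (0:ℝ), HasDerivAt vv (vd t) t := by
      intro t ht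
      obtain ⟨hrpos, hdr, hdω⟩ := htraj t ht
      have hdu : HasDerivAt u (Real.cos (ω t - α)) t := by
        rw [funext hut]; exact hdr.sub_const r0
      have hdq : HasDerivAt q (σ * (2 * r t * Real.sin (ω t)
          - (r t)⁻¹ * Real.sin (ω t - α))) t := by
        rw [funext hqt]; exact (hdω.sub_const ω0).const_mul σ
      have H := (((hdu.pow 2).const_mul a).add (hdq.pow 2)).sub ((hdu.mul hdq).const_mul (2 * η))
      rw [funext hvvt]
      refine H.congr_deriv ?_
      rw [hvdt t]
      push_cast
      ring
    -- the key differential inequality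
    have hkey : ∀ t ∈ Ici (0:ℝ), vv t ≤ m * ρ ^ 2 → vd t ≤ -(2 * c) * vv t := by
      intro t ht hvM
      obtain ⟨hrpos, -, -⟩ := htraj t ht
      have hrne : r t ≠ 0 := ne_of_gt hrpos
      rw [hvdt t, hvvt t, hU t, hW t]
      rw [hvvt t] at hvM
      have hRT : r t = r0 + u t := by rw [hut t]; ring
      have hN : u t ^ 2 + q t ^ 2 ≤ ρ ^ 2 := by
        have h1 := hvvm t
        rw [hvvt t] at h1
        have h2 : m * (u t ^ 2 + q t ^ 2) ≤ m * ρ ^ 2 := le_trans h1 hvM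
        exact le_of_mul_le_mul_left h2 hm
      have hXu : u t ≤ ρ := by
        clear * - hN hρpos; nlinarith [sq_nonneg (u t - ρ), sq_nonneg (q t)]
      have hXl : -ρ ≤ u t := by
        clear * - hN hρpos; nlinarith [sq_nonneg (u t + ρ), sq_nonneg (q t)]
      have hQu : q t ≤ ρ := by
        clear * - hN hρpos; nlinarith [sq_nonneg (q t - ρ), sq_nonneg (u t)]
      have hQl : -ρ ≤ q t := by
        clear * - hN hρpos; nlinarith [sq_nonneg (q t + ρ), sq_nonneg (u t)]
      have hrtl : r0 / 2 ≤ r t := by rw [hRT]; linarith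
      have hrtu : r t ≤ 3 * r0 / 2 := by rw [hRT]; linarith
      have hCb := auxCos (q t)
      rw [abs_le] at hCb
      have hSb := auxSin (x := q t) (abs_le.2 ⟨by linarith, by linarith⟩)
      rw [abs_le] at hSb
      obtain ⟨CC, hCC_def⟩ : ∃ x : ℝ, x = Real.cos (q t) - 1 := ⟨_, rfl⟩
      obtain ⟨SS, hSS_def⟩ : ∃ x : ℝ, x = Real.sin (q t) - q t := ⟨_, rfl⟩
      obtain ⟨X, hX_def⟩ : ∃ x : ℝ, x = u t := ⟨_, rfl⟩
      obtain ⟨Q, hQ_def⟩ : ∃ x : ℝ, x = q t := ⟨_, rfl⟩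
      obtain ⟨RT, hRT_def⟩ : ∃ x : ℝ, x = r t := ⟨_, rfl⟩
      have hC1 : -(Q ^ 2 / 2) ≤ CC := by rw [hCC_def, hQ_def]; linarith [hCb.1]
      have hC2' : CC ≤ 0 := by rw [hCC_def]; linarith [Real.cos_le_one (q t)]
      have hS1 : -(Q ^ 2) ≤ SS := by rw [hSS_def, hQ_def]; linarith [hSb.1]
      have hS2 : SS ≤ Q ^ 2 := by rw [hSS_def, hQ_def]; linarith [hSb.2]
      have hcosQ : Real.cos (q t) = 1 + CC := by rw [hCC_def]; ring
      have hsinQ : Real.sin (q t) = Q + SS := by rw [hSS_def, hQ_def]; ring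
      rw [hcosQ, hsinQ, ← hX_def, ← hQ_def, ← hRT_def]
      rw [← hX_def, ← hQ_def] at hvM hN
      rw [← hX_def] at hXu hXl
      rw [← hQ_def] at hQu hQl
      rw [← hRT_def] at hrne hrtl hrtu
      have hRT' : RT = r0 + X := by rw [hRT_def, hX_def]; exact hRT
      -- the remainder E of the angular equation
      obtain ⟨E, hE_def⟩ : ∃ x : ℝ,
          x = (2 * RT * (g * (1 + CC) - s * (Q + SS)) - RT⁻¹ * (1 + CC)) - (a * X - b * Q) :=
        ⟨_, rfl⟩
      have hinv : RT * RT⁻¹ = 1 := mul_inv_cancel₀ hrne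
      have hident : RT * E = -2 * g * X ^ 2 - 2 * s * X * Q * RT - CC
          + 2 * RT ^ 2 * (g * CC - s * SS) := by
        rw [hE_def, ha_def, hb_def, hRT']
        have hinv' : (r0 + X) * (r0 + X)⁻¹ = 1 := by rw [← hRT']; exact hinv
        linear_combination hr0sq - (1 + CC) * hinv'
      obtain ⟨N, hN_def⟩ : ∃ x : ℝ, x = X ^ 2 + Q ^ 2 := ⟨_, rfl⟩
      rw [← hN_def] at hN
      have hN0 : 0 ≤ N := by rw [hN_def]; positivity
      have hXQu : X * Q ≤ N / 2 := by
        rw [hN_def]; clear * - ; linarith [sq_nonneg (X - Q)]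
      have hXQl : -(N / 2) ≤ X * Q := by
        rw [hN_def]; clear * - ; linarith [sq_nonneg (X + Q)]
      have hX2N : X ^ 2 ≤ N := by
        rw [hN_def]; clear * - ; linarith [sq_nonneg Q]
      have hQ2N : Q ^ 2 ≤ N := by
        rw [hN_def]; clear * - ; linarith [sq_nonneg X]
      -- term bounds for RT * E
      have ht1u : -2 * g * X ^ 2 ≤ 0 := by clear * - hg; nlinarith [sq_nonneg X]
      have ht1l : -(2 * N) ≤ -2 * g * X ^ 2 := by
        clear * - hg hg1 hX2N hN0; nlinarith [sq_nonneg X]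
      have ht2u : -2 * s * X * Q * RT ≤ 3 * r0 * (N / 2) := by
        have hx1 : -(3 * r0) ≤ -2 * s * RT := by clear * - hs hs1 hrtl hrtu hr0pos; nlinarith
        have hx2 : -2 * s * RT ≤ 3 * r0 := by clear * - hs hs1 hrtl hrtu hr0pos; nlinarith
        have h := auxMul hx1 hx2 hXQl hXQu
        clear * - h; nlinarith [h]
      have ht2l : -(3 * r0 * (N / 2)) ≤ -2 * s * X * Q * RT := by
        have hx1 : -(3 * r0) ≤ -2 * s * RT := by clear * - hs hs1 hrtl hrtu hr0pos; nlinarith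
        have hx2 : -2 * s * RT ≤ 3 * r0 := by clear * - hs hs1 hrtl hrtu hr0pos; nlinarith
        have h := auxMul' hx1 hx2 hXQl hXQu
        clear * - h; nlinarith [h]
      have ht3u : -CC ≤ N / 2 := by clear * - hC1 hQ2N; linarith
      have ht3l : -(N / 2) ≤ -CC := by clear * - hC2' hN0; linarith
      have hy1 : -(3 / 2 * N) ≤ g * CC - s * SS := by
        clear * - hg hg1 hs hs1 hC1 hC2' hS1 hS2 hQ2N hN0; nlinarith
      have hy2 : g * CC - s * SS ≤ 3 / 2 * N := by
        clear * - hg hg1 hs hs1 hC1 hC2' hS1 hS2 hQ2N hN0; nlinarith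
      have hx1 : -(9 * r0 ^ 2 / 2) ≤ 2 * RT ^ 2 := by
        clear * -
        have h1 : (0:ℝ) ≤ 2 * RT ^ 2 := by positivity
        have h2 : (0:ℝ) ≤ 9 * r0 ^ 2 / 2 := by positivity
        linarith
      have hx2 : 2 * RT ^ 2 ≤ 9 * r0 ^ 2 / 2 := by clear * - hrtl hrtu hr0pos; nlinarith
      have ht4u : 2 * RT ^ 2 * (g * CC - s * SS) ≤ (9 * r0 ^ 2 / 2) * (3 / 2 * N) :=
        auxMul hx1 hx2 hy1 hy2
      have ht4l : -((9 * r0 ^ 2 / 2) * (3 / 2 * N)) ≤ 2 * RT ^ 2 * (g * CC - s * SS) :=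
        auxMul' hx1 hx2 hy1 hy2
      have hRTEu : RT * E ≤ K1 * N := by
        rw [hident, hK1_def]
        clear * - ht1u ht2u ht3u ht4u hN0; nlinarith
      have hRTEl : -(K1 * N) ≤ RT * E := by
        rw [hident, hK1_def]
        clear * - ht1l ht2l ht3l ht4l hN0; nlinarith
      have hEu : E ≤ C2 * N := by
        rcases le_or_gt E 0 with h | h
        · clear * - h hC2 hN0; nlinarith
        · have h2 := mul_le_mul_of_nonneg_left hrtl h.le
          clear * - h h2 hRTEu hC2r0 hr0pos hN0; nlinarith
      have hEl : -(C2 * N) ≤ E := by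
        rcases le_or_gt 0 E with h | h
        · clear * - h hC2 hN0; nlinarith
        · have h2 := mul_le_mul_of_nonneg_left hrtl (by linarith : (0:ℝ) ≤ -E)
          clear * - h h2 hRTEl hC2r0 hr0pos hN0; nlinarith
      -- rewrite goal into quadratic form plus error
      have hgoal_eq : 2 * a * X * -(Q + SS)
          + 2 * Q * (2 * RT * (g * (1 + CC) - s * (Q + SS)) - RT⁻¹ * (1 + CC))
          - 2 * η * (-(Q + SS) * Q
            + X * (2 * RT * (g * (1 + CC) - s * (Q + SS)) - RT⁻¹ * (1 + CC)))
          = -(2 * η * a * X ^ 2 + 2 * (b - η) * Q ^ 2 - 2 * η * b * (X * Q))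
            + (-(2 * a * X - 2 * η * Q) * SS + (2 * Q - 2 * η * X) * E) := by
        rw [hE_def]
        ring
      rw [hgoal_eq]
      have hQform : c1 * N ≤ 2 * η * a * X ^ 2 + 2 * (b - η) * Q ^ 2 - 2 * η * b * (X * Q) := by
        clear * - hηpos hη0 hma hm1 ha hb hm hc1_def hN_def
        have hθ : (0:ℝ) ≤ 2 * a * b - 2 * η * a - η * b ^ 2 - 2 * η * a * m := by
          have p := mul_nonneg (mul_nonneg hηpos.le ha.le) (show (0:ℝ) ≤ 1 - m by linarith)
          linarith
        have h1 : a * (c1 * N) ≤ a * (2 * η * a * X ^ 2 + 2 * (b - η) * Q ^ 2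
            - 2 * η * b * (X * Q)) := by
          rw [hc1_def, hN_def]
          have p1 := mul_nonneg hηpos.le (sq_nonneg (a * X - b * Q))
          have p2 := mul_nonneg (mul_nonneg (mul_nonneg hηpos.le ha.le)
            (show (0:ℝ) ≤ a - 2 * m by linarith)) (sq_nonneg X)
          have p3 := mul_nonneg hθ (sq_nonneg Q)
          nlinarith [p1, p2, p3]
        exact le_of_mul_le_mul_left h1 ha
      have herr : -(2 * a * X - 2 * η * Q) * SS + (2 * Q - 2 * η * X) * E ≤ (c1 / 2) * N := by
        have hx1 : -((2 * a + 1) * ρ) ≤ 2 * a * X - 2 * η * Q := by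
          clear * - ha hηpos hη2 hXu hXl hQu hQl hρpos; nlinarith
        have hx2 : 2 * a * X - 2 * η * Q ≤ (2 * a + 1) * ρ := by
          clear * - ha hηpos hη2 hXu hXl hQu hQl hρpos; nlinarith
        have hy1 : -(Q ^ 2) ≤ -SS := by linarith
        have hy2 : -SS ≤ Q ^ 2 := by linarith
        have hz1 : -(3 * ρ) ≤ 2 * Q - 2 * η * X := by
          clear * - hηpos hη2 hXu hXl hQu hQl hρpos; nlinarith
        have hz2 : 2 * Q - 2 * η * X ≤ 3 * ρ := by
          clear * - hηpos hη2 hXu hXl hQu hQl hρpos; nlinarith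
        have p1 : (2 * a * X - 2 * η * Q) * -SS ≤ (2 * a + 1) * ρ * Q ^ 2 :=
          auxMul hx1 hx2 hy1 hy2
        have p2 : (2 * Q - 2 * η * X) * E ≤ 3 * ρ * (C2 * N) := auxMul hz1 hz2 hEl hEu
        have hρC3N : ρ * C3 * N ≤ (c1 / 2) * N :=
          mul_le_mul_of_nonneg_right (by linarith [hρC3]) hN0
        have hQρ : (2 * a + 1) * ρ * Q ^ 2 ≤ (2 * a + 1) * ρ * N := by
          have : (0:ℝ) ≤ (2 * a + 1) * ρ := by positivity
          exact mul_le_mul_of_nonneg_left hQ2N this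
        have heq : (2 * a + 1) * ρ * N + 3 * ρ * (C2 * N) = ρ * C3 * N := by
          rw [hC3_def]; ring
        have hfix : -(2 * a * X - 2 * η * Q) * SS = (2 * a * X - 2 * η * Q) * -SS := by ring
        rw [hfix]
        clear * - p1 p2 hρC3N hQρ heq
        linarith
      have hvL : a * X ^ 2 + Q ^ 2 - 2 * η * (X * Q) ≤ L * N := by
        have h := hvvL t
        rw [hvvt t, ← hX_def, ← hQ_def, ← hN_def] at h
        exact h
      have h2cN : (2 * c) * (L * N) = (c1 / 2) * N := by
        clear * - hcL
        linear_combination (N / 2) * hcL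
      have h2cv : (2 * c) * (a * X ^ 2 + Q ^ 2 - 2 * η * (X * Q)) ≤ (c1 / 2) * N := by
        have h := mul_le_mul_of_nonneg_left hvL (by positivity : (0:ℝ) ≤ 2 * c)
        clear * - h h2cN
        linarith
      clear * - hQform herr h2cv hN0 hc1
      nlinarith
    -- initial condition
    have habsσ : ∀ x, |q x| = |ω x - ω0| := by
      intro x
      rw [hqt x, abs_mul, hσabs, one_mul]
    have hv0M : vv 0 < m * ρ ^ 2 := by
      have h0 : |u 0| + |q 0| < δ := by
        rw [hut 0, habsσ 0]
        exact hinit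
      have hN0' : u 0 ^ 2 + q 0 ^ 2 < δ ^ 2 := by
        have h1 : 0 ≤ |u 0| + |q 0| := by positivity
        have h2 : u 0 ^ 2 + q 0 ^ 2 ≤ (|u 0| + |q 0|) ^ 2 := by
          clear * -
          nlinarith [sq_abs (u 0), sq_abs (q 0), abs_nonneg (u 0), abs_nonneg (q 0),
            mul_nonneg (abs_nonneg (u 0)) (abs_nonneg (q 0))]
        calc u 0 ^ 2 + q 0 ^ 2 ≤ (|u 0| + |q 0|) ^ 2 := h2
        _ < δ ^ 2 := by clear * - h0 h1 hδpos; nlinarith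
      have h3 := hvvL 0
      have h4 : L * (u 0 ^ 2 + q 0 ^ 2) < L * δ ^ 2 := by
        exact mul_lt_mul_of_pos_left hN0' hL
      clear * - h3 h4 hδ2 hm hρpos
      have h5 : 0 < m * ρ ^ 2 := by positivity
      linarith
    -- exponential decay of the Lyapunov function
    have hdecay := auxDecay vv vd (2 * c) (m * ρ ^ 2) (by linarith) hder hvnn hv0M hkey
    -- conclusion
    intro t ht
    have h1 := hdecay t ht
    have h2 : vv 0 ≤ L * δ ^ 2 := by
      have h3 := hvvL 0
      have h0 : |u 0| + |q 0| < δ := by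
        rw [hut 0, habsσ 0]
        exact hinit
      have h2' : u 0 ^ 2 + q 0 ^ 2 ≤ δ ^ 2 := by
        clear * - h0 hδpos
        nlinarith [sq_abs (u 0), sq_abs (q 0), abs_nonneg (u 0), abs_nonneg (q 0),
          mul_nonneg (abs_nonneg (u 0)) (abs_nonneg (q 0))]
      have h4 := mul_le_mul_of_nonneg_left h2' hL.le
      linarith
    have hexp : Real.exp (-(2 * c) * t) = Real.exp (-c * t) ^ 2 := by
      rw [sq, ← Real.exp_add]
      congr 1
      ring
    have hEt : 0 < Real.exp (-c * t) := Real.exp_pos _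
    have hmN := hvvm t
    have hgoal2 : (|u t| + |q t|) ^ 2 ≤ (K * Real.exp (-c * t)) ^ 2 := by
      have hA2 : (|u t| + |q t|) ^ 2 ≤ 2 * (u t ^ 2 + q t ^ 2) := by
        clear * -
        nlinarith [sq_abs (u t), sq_abs (q t), sq_nonneg (|u t| - |q t|)]
      have hch : m * (|u t| + |q t|) ^ 2 ≤ 2 * (vv t) := by
        have := mul_le_mul_of_nonneg_left hA2 hm.le
        clear * - this hmN hm
        nlinarith
      have hch2 : vv t ≤ L * δ ^ 2 * Real.exp (-(2 * c) * t) := by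
        have := mul_le_mul_of_nonneg_right h2 (Real.exp_pos (-(2 * c) * t)).le
        clear * - this h1
        linarith
      have hKK : 2 * (L * δ ^ 2) = K ^ 2 * m := by rw [hK2m]; ring
      have hfin : m * (|u t| + |q t|) ^ 2 ≤ K ^ 2 * m * Real.exp (-(2 * c) * t) := by
        clear * - hch hch2 hKK
        nlinarith [Real.exp_pos (-(2 * c) * t)]
      rw [hexp] at hfin
      have := le_of_mul_le_mul_left (by linarith [hfin] :
        m * (|u t| + |q t|) ^ 2 ≤ m * (K ^ 2 * Real.exp (-c * t) ^ 2)) hm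
      clear * - this
      nlinarith [this]
    have hfinal : |u t| + |q t| ≤ K * Real.exp (-c * t) := by
      have hA0 : 0 ≤ |u t| + |q t| := by positivity
      have hB0 : 0 < K * Real.exp (-c * t) := by positivity
      clear * - hgoal2 hA0 hB0
      nlinarith [sq_nonneg (|u t| + |q t| - K * Real.exp (-c * t))]
    rw [hut t, habsσ t] at hfinal
    exact hfinal
  · -- radius in the original variable
    intro ε hε
    rw [hr0]
    ring
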